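/- Let u be an entropy solution of the obstacle problem with data (f,ψ,g), f ∈ L¹(Ω). Then for every t > 0, ∫_{{h ≤ |u| ≤ h+t}} A(|∇u|) dx → 0 as h → ∞. -/

import Mathlib

open Real Set MeasureTheory Filter

/-- Truncation at level `s`: `T_s(r) = max(-s, min(s, r))`. -/
noncomputable def trunc (s r : ℝ) : ℝ := max (-s) (min s r)

/-- The `A`-gradient `∇_A u = (a(|∇u|)/|∇u|)∇u`. -/
noncomputable def gradA {N : ℕ} (a : ℝ → ℝ)
    (u : EuclideanSpace ℝ (Fin N) → ℝ) (x : EuclideanSpace ℝ (Fin N)) :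
    EuclideanSpace ℝ (Fin N) :=
  (a ‖gradient u x‖ / ‖gradient u x‖) • gradient u x

set_option linter.unusedSectionVars false
set_option linter.unusedVariables false
set_option maxHeartbeats 1000000


lemma trunc_of_abs_le {s r : ℝ} (h : |r| ≤ s) : trunc s r = r := by
  rw [abs_le] at h; unfold trunc
  rw [min_eq_right h.2, max_eq_right h.1]

lemma trunc_of_le {s r : ℝ} (hs : 0 ≤ s) (h : s ≤ r) : trunc s r = s := by
  unfold trunc
  rw [min_eq_left h, max_eq_right (by linarith)]

lemma trunc_of_le_neg {s r : ℝ} (hs : 0 ≤ s) (h : r ≤ -s) : trunc s r = -s := by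
  unfold trunc
  rw [min_eq_right (by linarith), max_eq_left h]

lemma abs_trunc_le {s r : ℝ} (hs : 0 ≤ s) : |trunc s r| ≤ s := by
  rw [abs_le]; constructor
  · exact le_max_left _ _
  · exact max_le (by linarith) (min_le_left _ _)

section grad
variable {N : ℕ}
local notation "E" => EuclideanSpace ℝ (Fin N)

lemma diff_of_grad_ne {u : E → ℝ} {x : E} (h : gradient u x ≠ 0) :
    DifferentiableAt ℝ u x := by
  by_contra hc
  exact h (gradient_eq_zero_of_not_differentiableAt hc)

lemma gradient_congr_nhds {f g : E → ℝ} {x : E} (h : ∀ᶠ y in nhds x, f y = g y) :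
    gradient f x = gradient g x := by
  show (InnerProductSpace.toDual ℝ E).symm (fderiv ℝ f x)
    = (InnerProductSpace.toDual ℝ E).symm (fderiv ℝ g x)
  rw [Filter.EventuallyEq.fderiv_eq (h : f =ᶠ[nhds x] g)]

lemma gradient_constant (k : ℝ) (x : E) : gradient (fun _ => k) x = 0 := by
  show (InnerProductSpace.toDual ℝ E).symm (fderiv ℝ (fun _ => k) x) = 0
  rw [fderiv_fun_const]
  simp

lemma gradient_const_sub {u : E → ℝ} {x : E} (k : ℝ) (hd : DifferentiableAt ℝ u x) :
    gradient (fun y => k - u y) x = - gradient u x := by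
  show (InnerProductSpace.toDual ℝ E).symm (fderiv ℝ (fun y => k - u y) x) = _
  rw [(hd.hasFDerivAt.const_sub k).fderiv]
  show (InnerProductSpace.toDual ℝ E).symm (-(fderiv ℝ u x)) = _
  rw [map_neg]
  rfl

lemma fderiv_apply_eq_inner_gradient (u : E → ℝ) (x v : E) :
    fderiv ℝ u x v = @inner ℝ _ _ (gradient u x) v := by
  have : gradient u x = (InnerProductSpace.toDual ℝ E).symm (fderiv ℝ u x) := rfl
  rw [this]
  rw [← InnerProductSpace.toDual_apply_apply]
  simp
lemma not_diff_kink {u w : E → ℝ} {x : E} (hd : DifferentiableAt ℝ u x)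
    (hg : gradient u x ≠ 0) (k₁ k₂ β₁ β₂ : ℝ) (hβ : β₁ ≠ β₂)
    (hcons : w x = k₁ + β₁ * u x) (hcons2 : w x = k₂ + β₂ * u x)
    (hloc : ∀ᶠ y in nhds x, (u x < u y → w y = k₁ + β₁ * u y) ∧
        (u y < u x → w y = k₂ + β₂ * u y)) :
    ¬ DifferentiableAt ℝ w x := by
  intro hw
  set e : E := gradient u x with he
  have hce : (0:ℝ) < @inner ℝ _ _ e e := by
    rw [real_inner_self_eq_norm_sq]
    have : 0 < ‖gradient u x‖ := norm_pos_iff.2 hg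
    positivity
  set ce : ℝ := @inner ℝ _ _ e e with hcedef
  set L : ℝ → E := fun τ => x + τ • e with hL
  have hLd : HasDerivAt L e 0 := by
    have : HasDerivAt (fun τ : ℝ => τ • e) ((1:ℝ) • e) 0 := (hasDerivAt_id 0).smul_const e
    have h2 := this.const_add x
    rw [one_smul] at h2
    exact h2
  have hL0 : L 0 = x := by simp [hL]
  have hψ : HasDerivAt (fun τ => u (L τ)) ce 0 := by
    have hfd : HasFDerivAt u (fderiv ℝ u x) (L 0) := by rw [hL0]; exact hd.hasFDerivAt
    have := hfd.comp_hasDerivAt 0 hLd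
    rw [fderiv_apply_eq_inner_gradient] at this
    exact this
  have hω : HasDerivAt (fun τ => w (L τ)) (fderiv ℝ w x e) 0 := by
    have hfd : HasFDerivAt w (fderiv ℝ w x) (L 0) := by rw [hL0]; exact hw.hasFDerivAt
    exact hfd.comp_hasDerivAt 0 hLd
  set d : ℝ := fderiv ℝ w x e with hd'
  have hψ0 : u (L 0) = u x := by rw [hL0]
  have hω0 : w (L 0) = w x := by rw [hL0]
  -- eventual facts about hloc along L
  have hlocL : ∀ᶠ τ in nhds (0:ℝ), (u x < u (L τ) → w (L τ) = k₁ + β₁ * u (L τ)) ∧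
      (u (L τ) < u x → w (L τ) = k₂ + β₂ * u (L τ)) := by
    have hcont : ContinuousAt L 0 := hLd.continuousAt
    have := hcont.eventually (by rw [hL0]; exact hloc)
    exact this
  -- slope control
  have hslope := hasDerivAt_iff_tendsto_slope.1 hψ
  have hslope_pos : ∀ᶠ τ in nhdsWithin (0:ℝ) {(0:ℝ)}ᶜ, 0 < slope (fun τ => u (L τ)) 0 τ :=
    hslope.eventually (eventually_gt_nhds hce)
  have hgt : ∀ᶠ τ in nhdsWithin (0:ℝ) (Ioi 0), u x < u (L τ) := by
    have h1 : nhdsWithin (0:ℝ) (Ioi 0) ≤ nhdsWithin (0:ℝ) {(0:ℝ)}ᶜ :=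
      nhdsWithin_mono 0 (fun τ hτ => ne_of_gt hτ)
    filter_upwards [h1 hslope_pos, self_mem_nhdsWithin] with τ hs hτ
    have hτ0 : (0:ℝ) < τ := hτ
    rw [slope_def_field, sub_zero] at hs
    have : 0 < u (L τ) - u (L 0) := by
      rcases div_pos_iff.1 hs with ⟨h, _⟩ | ⟨_, h⟩
      · exact h
      · linarith
    rw [hψ0] at this; linarith
  have hlt : ∀ᶠ τ in nhdsWithin (0:ℝ) (Iio 0), u (L τ) < u x := by
    have h1 : nhdsWithin (0:ℝ) (Iio 0) ≤ nhdsWithin (0:ℝ) {(0:ℝ)}ᶜ :=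
      nhdsWithin_mono 0 (fun τ hτ => ne_of_lt hτ)
    filter_upwards [h1 hslope_pos, self_mem_nhdsWithin] with τ hs hτ
    have hτ0 : τ < (0:ℝ) := hτ
    rw [slope_def_field, sub_zero] at hs
    have : u (L τ) - u (L 0) < 0 := by
      rcases div_pos_iff.1 hs with ⟨_, h⟩ | ⟨h, _⟩
      · linarith
      · exact h
    rw [hψ0] at this; linarith
  -- derivative within Ioi
  have hright : HasDerivWithinAt (fun τ => w (L τ)) (β₁ * ce) (Ioi 0) 0 := by
    have hbase : HasDerivAt (fun τ => k₁ + β₁ * u (L τ)) (β₁ * ce) 0 :=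
      ((hψ.const_mul β₁).const_add k₁)
    apply hbase.hasDerivWithinAt.congr_of_eventuallyEq
    · filter_upwards [hgt, nhdsWithin_le_nhds hlocL] with τ h1 h2
      exact h2.1 h1
    · rw [hω0, hψ0, hcons]
  have hleft : HasDerivWithinAt (fun τ => w (L τ)) (β₂ * ce) (Iio 0) 0 := by
    have hbase : HasDerivAt (fun τ => k₂ + β₂ * u (L τ)) (β₂ * ce) 0 :=
      ((hψ.const_mul β₂).const_add k₂)
    apply hbase.hasDerivWithinAt.congr_of_eventuallyEq
    · filter_upwards [hlt, nhdsWithin_le_nhds hlocL] with τ h1 h2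
      exact h2.2 h1
    · rw [hω0, hψ0, hcons2]
  have e1 : d = β₁ * ce := by
    have h1 := hright.derivWithin (uniqueDiffWithinAt_Ioi (0:ℝ))
    have h2 := (hω.hasDerivWithinAt (s := Ioi 0)).derivWithin (uniqueDiffWithinAt_Ioi (0:ℝ))
    rw [← h1, ← h2]
  have e2 : d = β₂ * ce := by
    have h1 := hleft.derivWithin (uniqueDiffWithinAt_Iio (0:ℝ))
    have h2 := (hω.hasDerivWithinAt (s := Iio 0)).derivWithin (uniqueDiffWithinAt_Iio (0:ℝ))
    rw [← h1, ← h2]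
  apply hβ
  have : β₁ * ce = β₂ * ce := by rw [← e1, ← e2]
  exact mul_right_cancel₀ (ne_of_gt hce) this

end grad

section chi
variable {N : ℕ}
local notation "E" => EuclideanSpace ℝ (Fin N)

open scoped Classical in
lemma chi_eq (a : ℝ → ℝ) (u : E → ℝ) {h t : ℝ}
    (hh : 0 < h) (ht : 0 < t) (x : E) :
    @inner ℝ _ _ (gradA a u x) (gradient (fun y => trunc t (trunc h (u y) - u y)) x)
      = if gradient u x ≠ 0 ∧ h < |u x| ∧ |u x| < h + t
        then -(a ‖gradient u x‖ * ‖gradient u x‖) else 0 := by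
  classical
  have habs0 : |(0:ℝ)| ≤ t := by rw [abs_zero]; linarith
  have w0 : ∀ r : ℝ, |r| ≤ h → trunc t (trunc h r - r) = 0 := by
    intro r hr; rw [trunc_of_abs_le hr, sub_self, trunc_of_abs_le habs0]
  have w1 : ∀ r : ℝ, h ≤ r → r ≤ h + t → trunc t (trunc h r - r) = h - r := by
    intro r hr1 hr2
    rw [trunc_of_le hh.le hr1, trunc_of_abs_le (by rw [abs_le]; constructor <;> linarith)]
  have w2 : ∀ r : ℝ, h + t ≤ r → trunc t (trunc h r - r) = -t := by
    intro r hr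
    rw [trunc_of_le hh.le (by linarith), trunc_of_le_neg ht.le (by linarith)]
  have w3 : ∀ r : ℝ, -(h + t) ≤ r → r ≤ -h → trunc t (trunc h r - r) = -h - r := by
    intro r hr1 hr2
    rw [trunc_of_le_neg hh.le hr2, trunc_of_abs_le (by rw [abs_le]; constructor <;> linarith)]
  have w4 : ∀ r : ℝ, r ≤ -(h + t) → trunc t (trunc h r - r) = t := by
    intro r hr
    rw [trunc_of_le_neg hh.le (by linarith), trunc_of_le ht.le (by linarith)]
  by_cases hg : gradient u x = 0
  · have hz : gradA a u x = 0 := by rw [gradA, hg, smul_zero]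
    rw [hz, inner_zero_left, if_neg]
    rintro ⟨hg', _⟩; exact hg' hg
  have hd : DifferentiableAt ℝ u x := diff_of_grad_ne hg
  have hc : ContinuousAt u x := hd.continuousAt
  rcases lt_trichotomy |u x| h with hlt | heq | hgt
  · -- |u x| < h : locally zero
    have hev : ∀ᶠ y in nhds x, trunc t (trunc h (u y) - u y) = (fun _ => (0:ℝ)) y := by
      have hopen : IsOpen {r : ℝ | |r| < h} := isOpen_lt continuous_abs continuous_const
      filter_upwards [hc.eventually_mem (hopen.mem_nhds hlt)] with y hy
      exact w0 _ (le_of_lt hy)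
    rw [gradient_congr_nhds hev, gradient_constant, inner_zero_right, if_neg]
    rintro ⟨_, hgt', _⟩; exact absurd hlt (not_lt.2 hgt'.le)
  · -- |u x| = h : kink
    have hnd : ¬ DifferentiableAt ℝ (fun y => trunc t (trunc h (u y) - u y)) x := by
      rcases (abs_eq hh.le).1 heq with hcx | hcx
      · -- u x = h
        apply not_diff_kink hd hg h 0 (-1) 0 (by norm_num)
        · rw [w0 _ heq.le, hcx]; ring
        · rw [w0 _ heq.le]; ring
        · set δ : ℝ := min h t with hδ
          have hδpos : 0 < δ := lt_min hh ht
          have hopen : IsOpen (Ioo (h - δ) (h + δ)) := isOpen_Ioo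
          have hmem : u x ∈ Ioo (h - δ) (h + δ) := by
            rw [hcx]; constructor <;> simp [hδpos]
          filter_upwards [hc.eventually_mem (hopen.mem_nhds hmem)] with y hy
          constructor
          · intro hgt'
            rw [hcx] at hgt'
            rw [w1 _ hgt'.le (by have := hy.2; have : δ ≤ t := min_le_right h t; linarith)]
            ring
          · intro hlt'
            rw [hcx] at hlt'
            rw [w0 _ (by
              rw [abs_le]
              have h1 := hy.1
              have : δ ≤ h := min_le_left h t
              constructor <;> linarith)]
            ring
      · -- u x = -h
        apply not_diff_kink hd hg 0 (-h) 0 (-1) (by norm_num)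
        · rw [w0 _ heq.le]; ring
        · rw [w0 _ heq.le, hcx]; ring
        · set δ : ℝ := min h t with hδ
          have hδpos : 0 < δ := lt_min hh ht
          have hopen : IsOpen (Ioo (-h - δ) (-h + δ)) := isOpen_Ioo
          have hmem : u x ∈ Ioo (-h - δ) (-h + δ) := by
            rw [hcx]; constructor <;> simp [hδpos]
          filter_upwards [hc.eventually_mem (hopen.mem_nhds hmem)] with y hy
          constructor
          · intro hgt'
            rw [hcx] at hgt'
            rw [w0 _ (by
              rw [abs_le]
              have h2 := hy.2
              have : δ ≤ h := min_le_left h t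
              constructor <;> linarith)]
            ring
          · intro hlt'
            rw [hcx] at hlt'
            rw [w3 _ (by have := hy.1; have : δ ≤ t := min_le_right h t; linarith) hlt'.le]
            ring
    rw [gradient_eq_zero_of_not_differentiableAt hnd, inner_zero_right, if_neg]
    rintro ⟨_, hgt', _⟩; exact absurd heq (ne_of_gt hgt')
  · rcases lt_trichotomy |u x| (h + t) with hlt2 | heq2 | hgt2
    · -- main band
      rcases abs_cases (u x) with ⟨hx1, hx2⟩ | ⟨hx1, hx2⟩
      · -- u x > 0, h < u x < h + t
        have hpos' : h < u x := by rw [← hx1]; exact hgt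
        have hlt' : u x < h + t := by rw [← hx1]; exact hlt2
        have hev : ∀ᶠ y in nhds x,
            trunc t (trunc h (u y) - u y) = (fun y => h - u y) y := by
          have hopen : IsOpen {r : ℝ | h < r ∧ r < h + t} :=
            (isOpen_lt continuous_const continuous_id).inter
              (isOpen_lt continuous_id continuous_const)
          filter_upwards [hc.eventually_mem (hopen.mem_nhds ⟨hpos', hlt'⟩)] with y hy
          exact w1 _ hy.1.le hy.2.le
        rw [gradient_congr_nhds hev, gradient_const_sub h hd]
        rw [if_pos ⟨hg, hgt, hlt2⟩, gradA]
        rw [real_inner_smul_left, inner_neg_right, real_inner_self_eq_norm_sq]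
        have hn : ‖gradient u x‖ ≠ 0 := norm_ne_zero_iff.2 hg
        field_simp
      · -- u x < 0 : -(h+t) < u x < -h
        have hneg' : u x < -h := by nlinarith [abs_nonneg (u x)]
        have hgt' : -(h + t) < u x := by nlinarith [abs_nonneg (u x)]
        have hev : ∀ᶠ y in nhds x,
            trunc t (trunc h (u y) - u y) = (fun y => -h - u y) y := by
          have hopen : IsOpen {r : ℝ | -(h+t) < r ∧ r < -h} :=
            (isOpen_lt continuous_const continuous_id).inter
              (isOpen_lt continuous_id continuous_const)
          filter_upwards [hc.eventually_mem (hopen.mem_nhds ⟨hgt', hneg'⟩)] with y hy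
          exact w3 _ hy.1.le hy.2.le
        rw [gradient_congr_nhds hev, gradient_const_sub (-h) hd]
        rw [if_pos ⟨hg, hgt, hlt2⟩, gradA]
        rw [real_inner_smul_left, inner_neg_right, real_inner_self_eq_norm_sq]
        have hn : ‖gradient u x‖ ≠ 0 := norm_ne_zero_iff.2 hg
        field_simp
    · -- |u x| = h + t : kink
      have hnd : ¬ DifferentiableAt ℝ (fun y => trunc t (trunc h (u y) - u y)) x := by
        rcases (abs_eq (by linarith : (0:ℝ) ≤ h + t)).1 heq2 with hcx | hcx
        · -- u x = h + t
          apply not_diff_kink hd hg (-t) h 0 (-1) (by norm_num)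
          · rw [hcx, w2 _ le_rfl]; ring
          · rw [hcx, w2 _ le_rfl]; ring
          · have hopen : IsOpen (Ioo (h + t - t) (h + t + t)) := isOpen_Ioo
            have hmem : u x ∈ Ioo (h + t - t) (h + t + t) := by
              rw [hcx]; constructor <;> linarith
            filter_upwards [hc.eventually_mem (hopen.mem_nhds hmem)] with y hy
            constructor
            · intro hgt'
              rw [hcx] at hgt'
              rw [w2 _ hgt'.le]; ring
            · intro hlt'
              rw [hcx] at hlt'
              rw [w1 _ (by have := hy.1; linarith) hlt'.le]
              ring
        · -- u x = -(h + t)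
          apply not_diff_kink hd hg (-h) t (-1) 0 (by norm_num)
          · rw [hcx, w3 _ le_rfl (by linarith)]; ring
          · rw [hcx, w3 _ le_rfl (by linarith)]; ring
          · have hopen : IsOpen (Ioo (-(h + t) - t) (-(h + t) + t)) := isOpen_Ioo
            have hmem : u x ∈ Ioo (-(h + t) - t) (-(h + t) + t) := by
              rw [hcx]; constructor <;> linarith
            filter_upwards [hc.eventually_mem (hopen.mem_nhds hmem)] with y hy
            constructor
            · intro hgt'
              rw [hcx] at hgt'
              rw [w3 _ hgt'.le (by have := hy.2; linarith)]
              ring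
            · intro hlt'
              rw [hcx] at hlt'
              rw [w4 _ hlt'.le]; ring
      rw [gradient_eq_zero_of_not_differentiableAt hnd, inner_zero_right, if_neg]
      rintro ⟨_, _, hlt'⟩; exact absurd heq2 (ne_of_lt hlt')
    · -- |u x| > h + t : locally constant
      rcases abs_cases (u x) with ⟨hx1, hx2⟩ | ⟨hx1, hx2⟩
      · have hpos' : h + t < u x := by rw [← hx1]; exact hgt2
        have hev : ∀ᶠ y in nhds x,
            trunc t (trunc h (u y) - u y) = (fun _ => (-t : ℝ)) y := by
          have hopen : IsOpen {r : ℝ | h + t < r} := isOpen_lt continuous_const continuous_id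
          filter_upwards [hc.eventually_mem (hopen.mem_nhds hpos')] with y hy
          exact w2 _ (le_of_lt hy)
        rw [gradient_congr_nhds hev, gradient_constant, inner_zero_right, if_neg]
        rintro ⟨_, _, hlt'⟩; exact absurd hgt2 (not_lt.2 hlt'.le)
      · have hneg' : u x < -(h + t) := by nlinarith [abs_nonneg (u x)]
        have hev : ∀ᶠ y in nhds x,
            trunc t (trunc h (u y) - u y) = (fun _ => (t : ℝ)) y := by
          have hopen : IsOpen {r : ℝ | r < -(h + t)} := isOpen_lt continuous_id continuous_const
          filter_upwards [hc.eventually_mem (hopen.mem_nhds hneg')] with y hy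
          exact w4 _ (le_of_lt hy)
        rw [gradient_congr_nhds hev, gradient_constant, inner_zero_right, if_neg]
        rintro ⟨_, _, hlt'⟩; exact absurd hgt2 (not_lt.2 hlt'.le)
end chi

section acalc
variable {a a' : ℝ → ℝ} {a₀ a₁ : ℝ}
  (ha₀ : 0 < a₀) (ha₀₁ : a₀ ≤ a₁)
  (hderiv : ∀ t > (0:ℝ), HasDerivAt a (a' t) t)
  (haz : a 0 = 0) (hpos : ∀ t > (0:ℝ), 0 < a t)
  (hstruct : ∀ t > (0:ℝ), a₀ ≤ t * a' t / a t ∧ t * a' t / a t ≤ a₁)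

include ha₀ hderiv hpos hstruct in
lemma a_deriv_pos : ∀ t > (0:ℝ), 0 < a' t := by
  intro t ht
  have h1 := (hstruct t ht).1
  have h2 := hpos t ht
  have h3 : 0 < a₀ * a t := mul_pos ha₀ h2
  have : a₀ * a t ≤ t * a' t := by
    rw [le_div_iff₀ h2] at h1; linarith
  nlinarith

include hderiv in
lemma a_contOn : ContinuousOn a (Ioi 0) := fun t ht =>
  ((hderiv t ht).continuousAt).continuousWithinAt

include ha₀ hderiv hpos hstruct in
lemma a_strictMonoOn : StrictMonoOn a (Ioi 0) := by
  apply strictMonoOn_of_deriv_pos (convex_Ioi 0) (a_contOn hderiv)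
  intro t ht
  rw [interior_Ioi] at ht
  rw [(hderiv t ht).deriv]
  exact a_deriv_pos ha₀ hderiv hpos hstruct t ht

include ha₀ hderiv haz hpos hstruct in
lemma a_monoOn : MonotoneOn a (Ici 0) := by
  intro s hs τ hτ hsτ
  rcases eq_or_lt_of_le (Set.mem_Ici.mp hs) with h0 | h0
  · rcases eq_or_lt_of_le (Set.mem_Ici.mp hτ) with h1 | h1
    · rw [← h0, ← h1]
    · rw [← h0, haz]; exact (hpos τ h1).le
  · rcases eq_or_lt_of_le hsτ with h1 | h1
    · rw [h1]
    · exact (a_strictMonoOn ha₀ hderiv hpos hstruct h0 (h0.trans h1) h1).le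

include ha₀ hderiv haz hpos hstruct in
lemma a_max_monotone : Monotone (fun τ => a (max τ 0)) := by
  intro s τ h
  exact a_monoOn ha₀ hderiv haz hpos hstruct (le_max_right s 0) (le_max_right τ 0)
    (max_le_max h le_rfl)

include ha₀ hderiv haz hpos hstruct in
lemma a_intervalIntegrable {τ : ℝ} (hτ : 0 ≤ τ) : IntervalIntegrable a volume 0 τ := by
  apply MonotoneOn.intervalIntegrable
  intro s hs r hr hsr
  rw [uIcc_of_le hτ] at hs hr
  exact a_monoOn ha₀ hderiv haz hpos hstruct hs.1 hr.1 hsr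

variable {A : ℝ → ℝ} (hA : ∀ t, A t = ∫ s in (0:ℝ)..t, a s)

include ha₀ hderiv haz hpos hstruct hA in
lemma A_nonneg {τ : ℝ} (hτ : 0 ≤ τ) : 0 ≤ A τ := by
  rw [hA]
  apply intervalIntegral.integral_nonneg hτ
  intro s hs
  rcases eq_or_lt_of_le hs.1 with h | h
  · rw [← h, haz]
  · exact (hpos s h).le

include ha₀ hderiv haz hpos hstruct hA in
lemma A_le_self_mul {τ : ℝ} (hτ : 0 ≤ τ) : A τ ≤ τ * a τ := by
  rw [hA]
  calc (∫ s in (0:ℝ)..τ, a s) ≤ ∫ _ in (0:ℝ)..τ, a τ := by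
        apply intervalIntegral.integral_mono_on hτ
          (a_intervalIntegrable ha₀ hderiv haz hpos hstruct hτ) intervalIntegrable_const
        intro s hs
        exact a_monoOn ha₀ hderiv haz hpos hstruct hs.1 (hs.1.trans hs.2) hs.2
    _ = τ * a τ := by simp

end acalc

section acalc2
variable {a a' : ℝ → ℝ} {a₀ a₁ : ℝ}
  (ha₀ : 0 < a₀) (ha₀₁ : a₀ ≤ a₁)
  (hderiv : ∀ t > (0:ℝ), HasDerivAt a (a' t) t)
  (haz : a 0 = 0) (hpos : ∀ t > (0:ℝ), 0 < a t)
  (hstruct : ∀ t > (0:ℝ), a₀ ≤ t * a' t / a t ∧ t * a' t / a t ≤ a₁)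
  {A : ℝ → ℝ} (hA : ∀ t, A t = ∫ s in (0:ℝ)..t, a s)

include hderiv in
lemma a_contOn' : ContinuousOn a (Ioi 0) := fun t ht =>
  ((hderiv t ht).continuousAt).continuousWithinAt

include ha₀ hderiv haz hpos hstruct hA in
lemma A_hasDerivAt {s : ℝ} (hs : 0 < s) : HasDerivAt A (a s) s := by
  have hint : IntervalIntegrable a volume 0 s := by
    apply MonotoneOn.intervalIntegrable
    intro x hx y hy hxy
    rw [uIcc_of_le hs.le] at hx hy
    rcases eq_or_lt_of_le hx.1 with h | h
    · rw [← h, haz]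
      rcases eq_or_lt_of_le (hx.1.trans hxy) with h2 | h2
      · rw [← h2, haz]
      · exact (hpos y h2).le
    · have hy0 : 0 < y := h.trans_le hxy
      rcases eq_or_lt_of_le hxy with h2 | h2
      · rw [h2]
      · have mono : StrictMonoOn a (Ioi 0) := by
          apply strictMonoOn_of_deriv_pos (convex_Ioi 0) (a_contOn' hderiv)
          intro t ht
          rw [interior_Ioi] at ht
          rw [(hderiv t ht).deriv]
          have h1 := (hstruct t ht).1
          have h2 := hpos t ht
          rw [le_div_iff₀ h2] at h1
          have htp : (0:ℝ) < t := ht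
          nlinarith [mul_pos ha₀ h2]
        exact (mono h hy0 h2).le
  have hmeas : StronglyMeasurableAtFilter a (nhds s) volume :=
    ContinuousOn.stronglyMeasurableAtFilter isOpen_Ioi (a_contOn' hderiv) s hs
  have := intervalIntegral.integral_hasDerivAt_right hint hmeas
    ((hderiv s hs).continuousAt)
  have hAeq : A = fun t => ∫ x in (0:ℝ)..t, a x := funext hA
  rw [hAeq]
  exact this

include ha₀ ha₀₁ hderiv haz hpos hstruct hA in
lemma self_mul_le_A {τ : ℝ} (hτ : 0 < τ) : τ * a τ ≤ (1 + a₁) * A τ := by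
  set ρ : ℝ → ℝ := fun s => (1 + a₁) * A s - s * a s with hρ
  have hρderiv : ∀ s > (0:ℝ), HasDerivAt ρ ((1 + a₁) * a s - (a s + s * a' s)) s := by
    intro s hs
    exact ((A_hasDerivAt ha₀ hderiv haz hpos hstruct hA hs).const_mul _).sub
      (((hasDerivAt_id s).mul (hderiv s hs)).congr_deriv (by simp only [id_eq]; ring))
  have hderiv_nonneg : ∀ s > (0:ℝ), 0 ≤ (1 + a₁) * a s - (a s + s * a' s) := by
    intro s hs
    have h2 := (hstruct s hs).2
    have hps := hpos s hs
    rw [div_le_iff₀ hps] at h2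
    nlinarith
  have key : ∀ σ, 0 < σ → σ ≤ τ → ρ σ ≤ ρ τ := by
    intro σ hσ hστ
    have hmono : MonotoneOn ρ (Icc σ τ) := by
      apply monotoneOn_of_deriv_nonneg (convex_Icc σ τ)
      · intro s hs
        exact ((hρderiv s (hσ.trans_le hs.1)).continuousAt).continuousWithinAt
      · intro s hs
        rw [interior_Icc] at hs
        exact ((hρderiv s (hσ.trans hs.1)).differentiableAt).differentiableWithinAt
      · intro s hs
        rw [interior_Icc] at hs
        have h0 : 0 < s := hσ.trans hs.1
        rw [(hρderiv s h0).deriv]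
        exact hderiv_nonneg s h0
    exact hmono (left_mem_Icc.2 hστ) (right_mem_Icc.2 hστ) hστ
  have hτnn : 0 ≤ ρ τ := by
    have hlim : Tendsto (fun σ : ℝ => -(σ * a τ)) (nhdsWithin 0 (Ioi 0)) (nhds 0) := by
      have : Tendsto (fun σ : ℝ => -(σ * a τ)) (nhds 0) (nhds (-(0 * a τ))) := by
        exact (((continuous_id.mul continuous_const).neg).tendsto 0)
      simpa using this.mono_left nhdsWithin_le_nhds
    apply le_of_tendsto hlim
    filter_upwards [Ioo_mem_nhdsGT_of_mem (Set.left_mem_Ico.mpr hτ)] with σ hσ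
    have h1 : ρ σ ≤ ρ τ := key σ hσ.1 hσ.2.le
    have h2 : -(σ * a τ) ≤ ρ σ := by
      have hAσ : 0 ≤ A σ := by
        rw [hA]
        apply intervalIntegral.integral_nonneg hσ.1.le
        intro s hs
        rcases eq_or_lt_of_le hs.1 with h | h
        · rw [← h, haz]
        · exact (hpos s h).le
      have haσ : a σ ≤ a τ := by
        rcases eq_or_lt_of_le hσ.2.le with h | h
        · rw [h]
        · have mono : StrictMonoOn a (Ioi 0) := by
            apply strictMonoOn_of_deriv_pos (convex_Ioi 0) (a_contOn' hderiv)
            intro t ht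
            rw [interior_Ioi] at ht
            rw [(hderiv t ht).deriv]
            have h1 := (hstruct t ht).1
            have h2 := hpos t ht
            rw [le_div_iff₀ h2] at h1
            have htp : (0:ℝ) < t := ht
            nlinarith [mul_pos ha₀ h2]
          exact (mono hσ.1 hτ h).le
      have h3 : (0:ℝ) ≤ 1 + a₁ := by linarith
      have h4 : σ * a σ ≤ σ * a τ := mul_le_mul_of_nonneg_left haσ hσ.1.le
      have h5 : 0 ≤ (1 + a₁) * A σ := mul_nonneg h3 hAσ
      simp only [hρ]
      linarith
    linarith
  simp only [hρ] at hτnn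
  linarith
end acalc2

lemma diff_of_grad_ne' {N : ℕ} {u : EuclideanSpace ℝ (Fin N) → ℝ} {x : EuclideanSpace ℝ (Fin N)}
    (h : gradient u x ≠ 0) : DifferentiableAt ℝ u x := by
  by_contra hc
  exact h (gradient_eq_zero_of_not_differentiableAt hc)

lemma fderiv_apply_eq_inner_gradient' {N : ℕ} (u : EuclideanSpace ℝ (Fin N) → ℝ)
    (x v : EuclideanSpace ℝ (Fin N)) :
    fderiv ℝ u x v = @inner ℝ _ _ (gradient u x) v := by
  have : gradient u x = (InnerProductSpace.toDual ℝ (EuclideanSpace ℝ (Fin N))).symm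
      (fderiv ℝ u x) := rfl
  rw [this, ← InnerProductSpace.toDual_apply_apply]
  simp

lemma isolated_countable {S : Set ℝ}
    (h : ∀ τ ∈ S, ∀ᶠ σ in nhdsWithin τ {τ}ᶜ, σ ∉ S) : S.Countable := by
  haveI : DiscreteTopology ↥S := by
    rw [discreteTopology_subtype_iff]
    intro x hx
    rw [← Filter.empty_mem_iff_bot]
    have h1 : Sᶜ ∈ nhdsWithin x {x}ᶜ ⊓ Filter.principal S :=
      Filter.mem_inf_of_left (h x hx)
    have h2 : S ∈ nhdsWithin x {x}ᶜ ⊓ Filter.principal S :=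
      Filter.mem_inf_of_right (Filter.mem_principal_self S)
    have h3 := Filter.inter_mem h1 h2
    rwa [Set.compl_inter_self] at h3
  have : Countable ↥S := TopologicalSpace.separableSpace_iff_countable.mp inferInstance
  exact Set.countable_coe_iff.mp this

section level
variable {n : ℕ}
local notation "E'" => EuclideanSpace ℝ (Fin (n+1))

lemma level_null_coord (u : E' → ℝ) (c : ℝ) (i : Fin (n+1)) :
    volume {x : E' | gradient u x i ≠ 0 ∧ u x = c} = 0 := by
  classical
  set M : Set E' := {x : E' | gradient u x i ≠ 0 ∧ u x = c} with hMdef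
  -- measurability of M
  have hgradmeas : Measurable (fun x : E' => gradient u x) := by
    have heq : (fun x : E' => gradient u x) =
        (fun L => (InnerProductSpace.toDual ℝ E').symm L) ∘ (fun x : E' => fderiv ℝ u x) := rfl
    rw [heq]
    exact ((InnerProductSpace.toDual ℝ E').symm.continuous.measurable).comp
      (measurable_fderiv ℝ u)
  have hcoordmeas : Measurable (fun x : E' => gradient u x i) := by
    have hev : Measurable (fun v : E' => v i) :=
      (measurable_pi_apply i).comp (MeasurableEquiv.toLp 2 (Fin (n+1) → ℝ)).symm.measurable
    exact hev.comp hgradmeas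
  have hPi : MeasurableSet {x : E' | gradient u x i ≠ 0} := by
    have : {x : E' | gradient u x i ≠ 0} = ((fun x : E' => gradient u x i) ⁻¹' {0})ᶜ := by
      ext x; simp
    rw [this]
    exact (hcoordmeas (measurableSet_singleton 0)).compl
  have hgradne : ∀ x : E', gradient u x i ≠ 0 → gradient u x ≠ 0 := by
    intro x hx h0
    apply hx
    rw [h0]
    rfl
  have hM : MeasurableSet M := by
    have hMeq : M = {x : E' | gradient u x i ≠ 0} \ interior (u ⁻¹' ({c}ᶜ)) := by
      ext x
      constructor
      · rintro ⟨h1, h2⟩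
        exact ⟨h1, fun hx => (interior_subset hx) h2⟩
      · rintro ⟨h1, h2⟩
        refine ⟨h1, ?_⟩
        by_contra hne
        apply h2
        have hd : DifferentiableAt ℝ u x := diff_of_grad_ne' (hgradne x h1)
        exact mem_interior_iff_mem_nhds.2
          (hd.continuousAt.preimage_mem_nhds (isOpen_compl_singleton.mem_nhds hne))
    rw [hMeq]
    exact hPi.diff isOpen_interior.measurableSet
  -- transport to the product space
  set Φ := (MeasurableEquiv.toLp 2 (Fin (n+1) → ℝ)).symm with hΦdef
  set Ψ := MeasurableEquiv.piFinSuccAbove (fun _ : Fin (n+1) => ℝ) i with hΨdef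
  have hΦ : MeasurePreserving Φ.symm volume volume :=
    (EuclideanSpace.volume_preserving_symm_measurableEquiv_toLp (Fin (n+1))).symm Φ
  have hΨ : MeasurePreserving Ψ.symm volume volume :=
    (MeasureTheory.volume_preserving_piFinSuccAbove (fun _ : Fin (n+1) => ℝ) i).symm Ψ
  set T : Set (Fin (n+1) → ℝ) := Φ.symm ⁻¹' M with hTdef
  have hT : MeasurableSet T := Φ.symm.measurable hM
  set U : Set (ℝ × (Fin n → ℝ)) := Ψ.symm ⁻¹' T with hUdef
  have hU : MeasurableSet U := Ψ.symm.measurable hT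
  have e1 : volume M = volume U := by
    rw [← hΦ.measure_preimage_equiv M, ← hΨ.measure_preimage_equiv T]
  rw [e1]
  -- swap and use Fubini
  rw [show (volume : Measure (ℝ × (Fin n → ℝ))) = Measure.prod volume volume from
    Measure.volume_eq_prod ℝ (Fin n → ℝ)]
  have hswap : (Measure.prod (volume : Measure ℝ) (volume : Measure (Fin n → ℝ))) U
      = (Measure.prod (volume : Measure (Fin n → ℝ)) (volume : Measure ℝ))
        (Prod.swap ⁻¹' U) := by
    conv_lhs => rw [← MeasureTheory.Measure.prod_swap]
    rw [Measure.map_apply measurable_swap hU]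
  rw [hswap]
  rw [Measure.measure_prod_null (measurable_swap hU)]
  apply Filter.Eventually.of_forall
  intro y
  show volume (Prod.mk y ⁻¹' (Prod.swap ⁻¹' U)) = (0 : (Fin n → ℝ) → ENNReal) y
  have hsec : (Prod.mk y ⁻¹' (Prod.swap ⁻¹' U)) = {b : ℝ | (b, y) ∈ U} := rfl
  rw [hsec]
  show volume {b : ℝ | (b, y) ∈ U} = 0
  -- countability of the section
  apply Set.Countable.measure_zero
  apply isolated_countable
  intro b hb
  -- the point on the line
  set X : ℝ → E' := fun b' => Φ.symm (Ψ.symm (b', y)) with hXdef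
  have hbU : X b ∈ M := hb
  have hXlin : ∀ b' : ℝ, X b' = X b + (b' - b) • EuclideanSpace.single i (1:ℝ) := by
    intro b'
    ext j
    have hXapp : ∀ b'' : ℝ, X b'' j = Fin.insertNth (α := fun _ => ℝ) i b'' y j := fun _ => rfl
    rw [hXapp]
    have hadd : (X b + (b' - b) • EuclideanSpace.single i (1:ℝ)) j
        = X b j + (b' - b) * (EuclideanSpace.single i (1:ℝ) j) := rfl
    rw [hadd, hXapp]
    rcases eq_or_ne j i with rfl | hne
    · rw [Fin.insertNth_apply_same, Fin.insertNth_apply_same, EuclideanSpace.single_apply,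
        if_pos rfl]
      ring
    · obtain ⟨k, rfl⟩ := Fin.exists_succAbove_eq hne
      rw [EuclideanSpace.single_apply, if_neg (Fin.succAbove_ne i k),
        Fin.insertNth_apply_succAbove, Fin.insertNth_apply_succAbove]
      ring
  have hgne : gradient u (X b) ≠ 0 := hgradne _ hbU.1
  have hd : DifferentiableAt ℝ u (X b) := diff_of_grad_ne' hgne
  -- derivative of ψ along the line
  set ei : E' := EuclideanSpace.single i (1:ℝ) with heidef
  have hLd : HasDerivAt (fun b' : ℝ => X b + (b' - b) • ei) ei b := by
    have h1 : HasDerivAt (fun b' : ℝ => (b' - b)) 1 b := (hasDerivAt_id b).sub_const b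
    have h2 := (h1.smul_const ei).const_add (X b)
    simpa using h2
  have hψ : HasDerivAt (fun b' : ℝ => u (X b')) (gradient u (X b) i) b := by
    have hfd : HasFDerivAt u (fderiv ℝ u (X b)) ((fun b' : ℝ => X b + (b' - b) • ei) b) := by
      have : (fun b' : ℝ => X b + (b' - b) • ei) b = X b := by simp
      rw [this]; exact hd.hasFDerivAt
    have hcomp := hfd.comp_hasDerivAt b hLd
    have hval : fderiv ℝ u (X b) ei = gradient u (X b) i := by
      rw [fderiv_apply_eq_inner_gradient']
      have := EuclideanSpace.inner_single_right (𝕜 := ℝ) i (1:ℝ) (gradient u (X b))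
      rw [heidef, this]
      simp
    have heq : (fun b' : ℝ => u (X b')) = (u ∘ fun b' : ℝ => X b + (b' - b) • ei) := by
      funext b'
      simp only [Function.comp_apply, ← hXlin b']
    rw [heq, ← hval]
    exact hcomp
  -- isolation
  have hslope := hasDerivAt_iff_tendsto_slope.1 hψ
  have hne0 : gradient u (X b) i ≠ 0 := hbU.1
  filter_upwards [hslope.eventually_ne hne0, self_mem_nhdsWithin] with b' hs hb'
  intro hbU'
  have hX' : X b' ∈ M := hbU'
  have hub : u (X b) = c := hbU.2
  have hub' : u (X b') = c := hX'.2
  rw [slope_def_field, hub, hub', sub_self] at hs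
  apply hs
  simp
end level

section amono
variable {a a' : ℝ → ℝ} {a₀ a₁ : ℝ}
  (ha₀ : 0 < a₀) (ha₀₁ : a₀ ≤ a₁)
  (hderiv : ∀ t > (0:ℝ), HasDerivAt a (a' t) t)
  (haz : a 0 = 0) (hpos : ∀ t > (0:ℝ), 0 < a t)
  (hstruct : ∀ t > (0:ℝ), a₀ ≤ t * a' t / a t ∧ t * a' t / a t ≤ a₁)
  {A : ℝ → ℝ} (hA : ∀ t, A t = ∫ s in (0:ℝ)..t, a s)

include ha₀ hderiv haz hpos hstruct in
lemma a_mono_Ici : MonotoneOn a (Ici 0) := by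
  intro s hs τ hτ hsτ
  have mono : StrictMonoOn a (Ioi 0) := by
    apply strictMonoOn_of_deriv_pos (convex_Ioi 0)
      (fun t ht => ((hderiv t ht).continuousAt).continuousWithinAt)
    intro t ht
    rw [interior_Ioi] at ht
    rw [(hderiv t ht).deriv]
    have h1 := (hstruct t ht).1
    have h2 := hpos t ht
    rw [le_div_iff₀ h2] at h1
    have htp : (0:ℝ) < t := ht
    nlinarith [mul_pos ha₀ h2]
  rcases eq_or_lt_of_le (Set.mem_Ici.mp hs) with h0 | h0
  · rcases eq_or_lt_of_le ((Set.mem_Ici.mp hs).trans hsτ) with h1 | h1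
    · rw [← h0, ← h1]
    · rw [← h0, haz]; exact (hpos τ h1).le
  · rcases eq_or_lt_of_le hsτ with h1 | h1
    · rw [h1]
    · exact (mono h0 (h0.trans h1) h1).le

include ha₀ hderiv haz hpos hstruct hA in
lemma A_mono_Ici : MonotoneOn A (Ici 0) := by
  intro s hs τ hτ hsτ
  have hints : IntervalIntegrable a volume 0 s := by
    apply MonotoneOn.intervalIntegrable
    intro x hx y hy hxy
    rw [uIcc_of_le (hs : (0:ℝ) ≤ s)] at hx hy
    exact a_mono_Ici ha₀ hderiv haz hpos hstruct hx.1 hy.1 hxy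
  have hintτ : IntervalIntegrable a volume s τ := by
    apply MonotoneOn.intervalIntegrable
    intro x hx y hy hxy
    rw [uIcc_of_le hsτ] at hx hy
    exact a_mono_Ici ha₀ hderiv haz hpos hstruct ((hs : (0:ℝ) ≤ s).trans hx.1)
      ((hs : (0:ℝ) ≤ s).trans hy.1) hxy
  have hsplit : A τ = A s + ∫ x in s..τ, a x := by
    rw [hA, hA, intervalIntegral.integral_add_adjacent_intervals hints hintτ]
  rw [hsplit]
  have : 0 ≤ ∫ x in s..τ, a x := by
    apply intervalIntegral.integral_nonneg hsτ
    intro x hx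
    rcases eq_or_lt_of_le ((hs : (0:ℝ) ≤ s).trans hx.1) with h | h
    · rw [← h, haz]
    · exact (hpos x h).le
  linarith
end amono

section basics1
variable {N : ℕ}
local notation "E" => EuclideanSpace ℝ (Fin N)

lemma grad_meas (u : E → ℝ) : Measurable (fun x => gradient u x) := by
  have heq : (fun x => gradient u x) =
      (fun L => (InnerProductSpace.toDual ℝ E).symm L) ∘ (fun x => fderiv ℝ u x) := rfl
  rw [heq]
  exact ((InnerProductSpace.toDual ℝ E).symm.continuous.measurable).comp (measurable_fderiv ℝ u)

lemma inter_preimage_open {u : E → ℝ} {D : Set E} (hD : ∀ x ∈ D, ContinuousAt u x)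
    {O : Set ℝ} (hO : IsOpen O) : D ∩ u ⁻¹' O = D ∩ interior (u ⁻¹' O) := by
  apply Set.eq_of_subset_of_subset
  · rintro x ⟨hxD, hxO⟩
    exact ⟨hxD, mem_interior_iff_mem_nhds.2 ((hD x hxD).preimage_mem_nhds (hO.mem_nhds hxO))⟩
  · rintro x ⟨hxD, hxO⟩
    exact ⟨hxD, interior_subset hxO⟩
end basics1

lemma level_null_all {N : ℕ} (hN : 1 ≤ N) (u : EuclideanSpace ℝ (Fin N) → ℝ) (c : ℝ) :
    volume {x : EuclideanSpace ℝ (Fin N) | gradient u x ≠ 0 ∧ u x = c} = 0 := by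
  obtain ⟨n, rfl⟩ : ∃ n, N = n + 1 := ⟨N - 1, by omega⟩
  have hsub : {x : EuclideanSpace ℝ (Fin (n+1)) | gradient u x ≠ 0 ∧ u x = c} ⊆
      ⋃ i : Fin (n+1), {x | gradient u x i ≠ 0 ∧ u x = c} := by
    rintro x ⟨hg, hu⟩
    have hex : ∃ i, gradient u x i ≠ 0 := by
      by_contra hcon
      push_neg at hcon
      apply hg
      ext i
      exact hcon i
    obtain ⟨i, hi⟩ := hex
    exact mem_iUnion.2 ⟨i, hi, hu⟩
  exact measure_mono_null hsub (measure_iUnion_null fun i => level_null_coord u c i)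

/-- Lemma 3.3: if `u` is an entropy solution of the obstacle problem with data `(f,ψ,g)`,
`f ∈ L¹(Ω)`, then for every `t > 0`,
`∫_{h ≤ |u| ≤ h+t} A(|∇u|) dx → 0` as `h → ∞`. -/
theorem stmt_9 {N : ℕ} (hN : 2 ≤ N)
    (Ω : Set (EuclideanSpace ℝ (Fin N))) (hΩo : IsOpen Ω)
    (hΩb : Bornology.IsBounded Ω)
    (a a' : ℝ → ℝ) (a₀ a₁ : ℝ)
    (ha₀ : 0 < a₀) (ha₀₁ : a₀ ≤ a₁)
    (hderiv : ∀ t > (0:ℝ), HasDerivAt a (a' t) t)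
    (haz : a 0 = 0) (hpos : ∀ t > (0:ℝ), 0 < a t)
    (hstruct : ∀ t > (0:ℝ), a₀ ≤ t * a' t / a t ∧ t * a' t / a t ≤ a₁)
    (A : ℝ → ℝ) (hA : ∀ t, A t = ∫ s in (0:ℝ)..t, a s)
    (ψ g f u : EuclideanSpace ℝ (Fin N) → ℝ)
    (hψbdd : ∃ M, ∀ x ∈ Ω, |ψ x| ≤ M) (hgbdd : ∃ M, ∀ x ∈ Ω, |g x| ≤ M)
    -- the admissible convex set `K_{ψ,g}`, containing the truncations of `u`
    (K : Set (EuclideanSpace ℝ (Fin N) → ℝ))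
    (hK : ∀ v ∈ K, ∀ᵐ x ∂(volume.restrict Ω), ψ x ≤ v x)
    (hTuK : ∀ h : ℝ, (∀ x ∈ Ω, |ψ x| ≤ h) → (∀ x ∈ Ω, |g x| ≤ h) →
      (fun y => trunc h (u y)) ∈ K)
    (hf : IntegrableOn f Ω)
    -- `u` is an entropy solution
    (huψ : ∀ᵐ x ∂(volume.restrict Ω), ψ x ≤ u x)
    (hentropy : ∀ v ∈ K, ∀ s > (0:ℝ),
      0 ≤ (∫ x in Ω, @inner ℝ _ _ (gradA a u x)
              (gradient (fun y => trunc s (v y - u y)) x))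
          + ∫ x in Ω, f x * trunc s (v x - u x)) :
    ∀ t > (0:ℝ),
      Tendsto (fun h : ℝ =>
          ∫ x in {x ∈ Ω | h ≤ |u x| ∧ |u x| ≤ h + t}, A ‖gradient u x‖)
        atTop (nhds 0) := by
  intro t ht
  classical
  obtain ⟨Mψ, hMψ⟩ := hψbdd
  obtain ⟨Mg, hMg⟩ := hgbdd
  have hN1 : 1 ≤ N := by omega
  have hgradmeas : Measurable (fun x : EuclideanSpace ℝ (Fin N) => gradient u x) := grad_meas u
  set D : Set (EuclideanSpace ℝ (Fin N)) := {x | gradient u x ≠ 0} with hDdef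
  have hDmeas : MeasurableSet D := by
    have hDeq : D = ((fun x : EuclideanSpace ℝ (Fin N) => gradient u x) ⁻¹' {0})ᶜ := by
      ext x; simp [hDdef]
    rw [hDeq]; exact (hgradmeas (measurableSet_singleton 0)).compl
  have hcontD : ∀ x ∈ D, ContinuousAt u x := fun x hx => (diff_of_grad_ne hx).continuousAt
  set G : EuclideanSpace ℝ (Fin N) → ℝ := fun x => a ‖gradient u x‖ * ‖gradient u x‖ with hGdef
  set F : EuclideanSpace ℝ (Fin N) → ℝ := fun x => A ‖gradient u x‖ with hFdef
  have hnormmeas : Measurable (fun x : EuclideanSpace ℝ (Fin N) => ‖gradient u x‖) :=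
    hgradmeas.norm
  have hamax : Monotone (fun τ => a (max τ 0)) := fun s τ hsτ =>
    a_mono_Ici ha₀ hderiv haz hpos hstruct (Set.mem_Ici.mpr (le_max_right _ _))
      (Set.mem_Ici.mpr (le_max_right _ _)) (max_le_max hsτ le_rfl)
  have hGmeas : Measurable G := by
    have h1 : Measurable (fun x : EuclideanSpace ℝ (Fin N) => a (max ‖gradient u x‖ 0)) :=
      hamax.measurable.comp hnormmeas
    have h2 : (fun x : EuclideanSpace ℝ (Fin N) => a (max ‖gradient u x‖ 0))
        = fun x => a ‖gradient u x‖ := by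
      funext x; rw [max_eq_left (norm_nonneg _)]
    rw [h2] at h1
    exact h1.mul hnormmeas
  have hAmax : Monotone (fun τ => A (max τ 0)) := fun s τ hsτ =>
    A_mono_Ici ha₀ hderiv haz hpos hstruct hA (Set.mem_Ici.mpr (le_max_right _ _))
      (Set.mem_Ici.mpr (le_max_right _ _)) (max_le_max hsτ le_rfl)
  have hFmeas : Measurable F := by
    have h1 : Measurable (fun x : EuclideanSpace ℝ (Fin N) => A (max ‖gradient u x‖ 0)) :=
      hAmax.measurable.comp hnormmeas
    have h2 : (fun x : EuclideanSpace ℝ (Fin N) => A (max ‖gradient u x‖ 0))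
        = fun x => A ‖gradient u x‖ := by
      funext x; rw [max_eq_left (norm_nonneg _)]
    rw [h2] at h1
    exact h1
  have hA0 : A 0 = 0 := by rw [hA]; exact intervalIntegral.integral_same
  have hFnonneg : ∀ x, 0 ≤ F x := fun x =>
    A_nonneg ha₀ hderiv haz hpos hstruct hA (norm_nonneg _)
  have hanonneg : ∀ τ : ℝ, 0 ≤ τ → 0 ≤ a τ := by
    intro τ hτ
    rcases eq_or_lt_of_le hτ with h0 | h0
    · rw [← h0, haz]
    · exact (hpos τ h0).le
  have hFG : ∀ x, F x ≤ G x := by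
    intro x
    have h1 := A_le_self_mul ha₀ hderiv haz hpos hstruct hA (norm_nonneg (gradient u x))
    show A ‖gradient u x‖ ≤ a ‖gradient u x‖ * ‖gradient u x‖
    linarith [mul_comm ‖gradient u x‖ (a ‖gradient u x‖)]
  have hGF : ∀ x, G x ≤ (1 + a₁) * F x := by
    intro x
    show a ‖gradient u x‖ * ‖gradient u x‖ ≤ (1 + a₁) * A ‖gradient u x‖
    rcases eq_or_lt_of_le (norm_nonneg (gradient u x)) with h0 | h0
    · rw [← h0, haz, hA0]; simp
    · have := self_mul_le_A ha₀ ha₀₁ hderiv haz hpos hstruct hA h0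
      linarith [mul_comm ‖gradient u x‖ (a ‖gradient u x‖)]
  have hGnonneg : ∀ x, 0 ≤ G x := fun x =>
    mul_nonneg (hanonneg _ (norm_nonneg _)) (norm_nonneg _)
  have hFzero : ∀ x, x ∉ D → F x = 0 := by
    intro x hx
    have h0 : gradient u x = 0 := not_not.1 hx
    show A ‖gradient u x‖ = 0
    rw [h0, norm_zero, hA0]
  have hFind : F = D.indicator F := by
    funext x
    by_cases hx : x ∈ D
    · rw [Set.indicator_of_mem hx]
    · rw [Set.indicator_of_notMem hx, hFzero x hx]
  set H₀ : ℝ := max Mψ (max Mg 1) with hH₀def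
  have key : ∀ h : ℝ, H₀ ≤ h →
      (0 ≤ ∫ x in {x ∈ Ω | h ≤ |u x| ∧ |u x| ≤ h + t}, F x) ∧
      ((∫ x in {x ∈ Ω | h ≤ |u x| ∧ |u x| ≤ h + t}, F x) = 0 ∨
       (∫ x in {x ∈ Ω | h ≤ |u x| ∧ |u x| ≤ h + t}, F x)
          ≤ ∫ x in Ω, f x * trunc t (trunc h (u x) - u x)) := by
    intro h hh
    have hh1 : (1:ℝ) ≤ h :=
      le_trans (le_trans (le_max_right Mg 1) (le_max_right Mψ (max Mg 1))) hh
    have hhpos : (0:ℝ) < h := by linarith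
    set S : Set ℝ := {r : ℝ | h < |r| ∧ |r| < h + t} with hSdef
    have hSopen : IsOpen S :=
      (isOpen_lt continuous_const continuous_abs).inter
        (isOpen_lt continuous_abs continuous_const)
    set X : Set (EuclideanSpace ℝ (Fin N)) := D ∩ interior (u ⁻¹' S) with hXdef
    have hXmeas : MeasurableSet X := hDmeas.inter isOpen_interior.measurableSet
    have hXeq : D ∩ u ⁻¹' S = X := inter_preimage_open hcontD hSopen
    set Y : Set (EuclideanSpace ℝ (Fin N)) := Ω ∩ X with hYdef
    have hstep1 : (∫ x in {x ∈ Ω | h ≤ |u x| ∧ |u x| ≤ h + t}, F x) = ∫ x in Y, F x := by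
      set Eh : Set (EuclideanSpace ℝ (Fin N)) :=
        {x ∈ Ω | h ≤ |u x| ∧ |u x| ≤ h + t} with hEhdef
      have e1 : (∫ x in Eh, F x) = ∫ x in D, F x ∂(volume.restrict Eh) := by
        conv_lhs => rw [hFind]
        exact integral_indicator hDmeas
      rw [e1, Measure.restrict_restrict hDmeas]
      have hsub1 : (D ∩ Eh) \ Y ⊆
          ({x | gradient u x ≠ 0 ∧ u x = h} ∪ {x | gradient u x ≠ 0 ∧ u x = -h}
            ∪ {x | gradient u x ≠ 0 ∧ u x = h + t})
            ∪ {x | gradient u x ≠ 0 ∧ u x = -(h+t)} := by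
        rintro x ⟨⟨hxD, hxΩ, hx1, hx2⟩, hxY⟩
        have hxAbs : |u x| = h ∨ |u x| = h + t := by
          by_contra hcon
          push_neg at hcon
          apply hxY
          refine ⟨hxΩ, ?_⟩
          rw [← hXeq]
          exact ⟨hxD, lt_of_le_of_ne hx1 (Ne.symm hcon.1), lt_of_le_of_ne hx2 hcon.2⟩
        have hxD' : gradient u x ≠ 0 := hxD
        rcases hxAbs with h1 | h1
        · rcases (abs_eq hhpos.le).1 h1 with h2 | h2
          · exact Or.inl (Or.inl (Or.inl ⟨hxD', h2⟩))
          · exact Or.inl (Or.inl (Or.inr ⟨hxD', h2⟩))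
        · rcases (abs_eq (by linarith : (0:ℝ) ≤ h + t)).1 h1 with h2 | h2
          · exact Or.inl (Or.inr ⟨hxD', h2⟩)
          · exact Or.inr ⟨hxD', h2⟩
      have hnull : volume ((D ∩ Eh) \ Y) = 0 := by
        apply measure_mono_null hsub1
        apply measure_union_null
        · apply measure_union_null
          · apply measure_union_null
            · exact level_null_all hN1 u h
            · exact level_null_all hN1 u (-h)
          · exact level_null_all hN1 u (h + t)
        · exact level_null_all hN1 u (-(h+t))
      have hsub2 : Y \ (D ∩ Eh) = ∅ := by
        rw [Set.eq_empty_iff_forall_notMem]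
        rintro x ⟨⟨hxΩ, hxD, hxint⟩, hxn⟩
        apply hxn
        have hxS : u x ∈ S := (interior_subset hxint : x ∈ u ⁻¹' S)
        exact ⟨hxD, hxΩ, hxS.1.le, hxS.2.le⟩
      have hre : volume.restrict (D ∩ Eh) = volume.restrict Y := by
        apply Measure.restrict_congr_set
        rw [MeasureTheory.ae_eq_set]
        exact ⟨hnull, by rw [hsub2]; simp⟩
      rw [hre]
    by_cases hint : Integrable G (volume.restrict Y)
    · refine ⟨by rw [hstep1]; exact integral_nonneg hFnonneg, Or.inr ?_⟩
      have hIa : (∫ x in {x ∈ Ω | h ≤ |u x| ∧ |u x| ≤ h + t}, F x) ≤ ∫ x in Y, G x := by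
        rw [hstep1]
        exact integral_mono_of_nonneg (Filter.Eventually.of_forall hFnonneg) hint
          (Filter.Eventually.of_forall hFG)
      have hv : (fun y => trunc h (u y)) ∈ K :=
        hTuK h (fun x hx => le_trans (hMψ x hx) (le_trans (le_max_left _ _) hh))
          (fun x hx => le_trans (hMg x hx)
            (le_trans (le_trans (le_max_left Mg 1) (le_max_right Mψ (max Mg 1))) hh))
      have h0 := hentropy _ hv t ht
      beta_reduce at h0
      have hchi : (fun x => @inner ℝ _ _ (gradA a u x)
          (gradient (fun y => trunc t (trunc h (u y) - u y)) x))
          = fun x => X.indicator (fun x => -(G x)) x := by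
        funext x
        rw [chi_eq a u hhpos ht x]
        by_cases hx : x ∈ X
        · rw [Set.indicator_of_mem hx, if_pos]
          · have hxX : x ∈ D ∩ u ⁻¹' S := by rw [hXeq]; exact hx
            obtain ⟨hg1, hu1⟩ := hxX
            exact ⟨hg1, hu1.1, hu1.2⟩
        · rw [Set.indicator_of_notMem hx, if_neg]
          rintro ⟨hg1, h1, h2⟩
          exact hx (by rw [← hXeq]; exact ⟨hg1, h1, h2⟩)
      rw [hchi] at h0
      have hcomp : (∫ x in Ω, X.indicator (fun x => -(G x)) x) = - ∫ x in Y, G x := by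
        rw [integral_indicator hXmeas, Measure.restrict_restrict hXmeas,
          show X ∩ Ω = Y from by rw [hYdef, Set.inter_comm], integral_neg]
      rw [hcomp] at h0
      linarith
    · refine ⟨by rw [hstep1]; exact integral_nonneg hFnonneg, Or.inl ?_⟩
      rw [hstep1]
      apply integral_undef
      intro hFint
      apply hint
      apply Integrable.mono' (hFint.const_mul (1 + a₁)) hGmeas.aestronglyMeasurable
      apply Filter.Eventually.of_forall
      intro x
      rw [Real.norm_eq_abs, abs_of_nonneg (hGnonneg x)]
      exact hGF x
  -- Step 3
  rw [Metric.tendsto_nhds]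
  by_contra hcon
  push_neg at hcon
  obtain ⟨ε, hε, hfreq⟩ := hcon
  have hsel := Filter.frequently_atTop.mp hfreq
  choose φ hφ₁ hφ₂ using fun n : ℕ => hsel (max (n : ℝ) H₀)
  have hkey : ∀ n : ℕ, ε ≤ ∫ x in Ω, f x * trunc t (trunc (φ n) (u x) - u x) := by
    intro n
    have hH : H₀ ≤ φ n := le_trans (le_max_right _ _) (hφ₁ n)
    obtain ⟨hnn, hor⟩ := key (φ n) hH
    have hdist := hφ₂ n
    rw [Real.dist_eq, sub_zero, abs_of_nonneg hnn] at hdist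
    rcases hor with h0 | hle
    · rw [h0] at hdist; linarith
    · linarith
  have hmeas : ∀ n : ℕ, AEStronglyMeasurable
      (fun x => f x * trunc t (trunc (φ n) (u x) - u x)) (volume.restrict Ω) := by
    intro n
    by_contra hnm
    have h0 : (∫ x in Ω, f x * trunc t (trunc (φ n) (u x) - u x)) = 0 :=
      integral_undef (fun hi => hnm hi.aestronglyMeasurable)
    have := hkey n
    rw [h0] at this
    linarith
  have hbound : ∀ n : ℕ, ∀ᵐ x ∂(volume.restrict Ω),
      ‖f x * trunc t (trunc (φ n) (u x) - u x)‖ ≤ t * |f x| := by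
    intro n
    apply Filter.Eventually.of_forall
    intro x
    rw [Real.norm_eq_abs, abs_mul]
    calc |f x| * |trunc t (trunc (φ n) (u x) - u x)| ≤ |f x| * t :=
          mul_le_mul_of_nonneg_left (abs_trunc_le ht.le) (abs_nonneg _)
      _ = t * |f x| := mul_comm _ _
  have hbint : Integrable (fun x => t * |f x|) (volume.restrict Ω) := by
    have := hf.norm.const_mul t
    simpa [Real.norm_eq_abs] using this
  have hlim : ∀ᵐ x ∂(volume.restrict Ω),
      Tendsto (fun n : ℕ => f x * trunc t (trunc (φ n) (u x) - u x)) atTop (nhds 0) := by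
    apply Filter.Eventually.of_forall
    intro x
    obtain ⟨m, hm⟩ := exists_nat_ge |u x|
    have hev : ∀ᶠ n : ℕ in atTop, f x * trunc t (trunc (φ n) (u x) - u x) = 0 := by
      filter_upwards [Filter.eventually_ge_atTop m] with n hn
      have h1 : |u x| ≤ φ n := by
        calc |u x| ≤ (m : ℝ) := hm
          _ ≤ (n : ℝ) := Nat.cast_le.2 hn
          _ ≤ max (n : ℝ) H₀ := le_max_left _ _
          _ ≤ φ n := hφ₁ n
      rw [trunc_of_abs_le h1, sub_self, trunc_of_abs_le (by rw [abs_zero]; linarith), mul_zero]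
    exact Tendsto.congr' (hev.mono fun n hn => hn.symm) tendsto_const_nhds
  have hDCT := tendsto_integral_of_dominated_convergence _ hmeas hbint hbound hlim
  have hconv : Tendsto (fun n : ℕ => ∫ x in Ω, f x * trunc t (trunc (φ n) (u x) - u x))
      atTop (nhds 0) := by simpa using hDCT
  have hfin := ge_of_tendsto hconv (Filter.Eventually.of_forall hkey)
  linarith
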